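/- Let R be a complete local UFD of residue characteristic ≠ 2, ρ a 2-dimensional irreducible residually disjoint reducible representation of G with a stable free lattice, and N the set of height-one primes where the reducibility ideal J is locally proper. If N is empty, then all G-stable lattices of V are homothetic; i.e., the set of homothety classes of stable reflexive lattices is a singleton. -/

import Mathlib

open IsLocalRing

/-- A prime ideal of height one. -/
def IsHeightOnePrime {R : Type*} [CommRing R] (p : Ideal R) : Prop :=
  p.IsPrime ∧ p ≠ ⊥ ∧ ∀ q : Ideal R, q.IsPrime → q < p → q = ⊥

/-- Scaling of an `R`-lattice by `x : K`. -/
noncomputable def latSmul (R K : Type*) {V : Type*} [CommRing R] [Field K] [Algebra R K]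
    [AddCommGroup V] [Module K V] [Module R V] [IsScalarTower R K V]
    (x : K) (T : Submodule R V) : Submodule R V :=
  Submodule.map ((LinearMap.lsmul K V x).restrictScalars R) T

/-- Homothety of lattices. -/
def Homothetic (R K : Type*) {V : Type*} [CommRing R] [Field K] [Algebra R K]
    [AddCommGroup V] [Module K V] [Module R V] [IsScalarTower R K V]
    (T T' : Submodule R V) : Prop :=
  ∃ x : K, x ≠ 0 ∧ latSmul R K x T = T'

section ReflexiveTransfer

variable {R M N : Type*} [CommRing R] [AddCommGroup M] [Module R M]
  [AddCommGroup N] [Module R N]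

theorem aux_dual_eval_natural (f : M →ₗ[R] N) (x : M) :
    Module.Dual.eval R N (f x) = f.dualMap.dualMap (Module.Dual.eval R M x) := rfl

theorem aux_bijective_dual_eval_of_retract (i : N →ₗ[R] M) (p : M →ₗ[R] N)
    (hpi : ∀ x, p (i x) = x) (h : Function.Bijective (Module.Dual.eval R M)) :
    Function.Bijective (Module.Dual.eval R N) := by
  constructor
  · intro x y hxy
    have h1 : Module.Dual.eval R M (i x) = Module.Dual.eval R M (i y) := by
      rw [aux_dual_eval_natural, aux_dual_eval_natural, hxy]
    have h2 := congrArg p (h.1 h1)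
    rwa [hpi, hpi] at h2
  · intro Φ
    obtain ⟨x, hx⟩ := h.2 (i.dualMap.dualMap Φ)
    refine ⟨p x, ?_⟩
    have h2 : Module.Dual.eval R N (p x) = p.dualMap.dualMap (Module.Dual.eval R M x) := rfl
    rw [h2, hx]
    ext φ
    show Φ (i.dualMap (p.dualMap φ)) = Φ φ
    congr 1
    ext z
    show φ (p (i z)) = φ z
    rw [hpi]

theorem aux_bijective_dual_eval_of_equiv (e : M ≃ₗ[R] N)
    (h : Function.Bijective (Module.Dual.eval R M)) :
    Function.Bijective (Module.Dual.eval R N) :=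
  aux_bijective_dual_eval_of_retract e.symm.toLinearMap e.toLinearMap
    (fun x => e.apply_symm_apply x) h

end ReflexiveTransfer

theorem aux_principal {R K : Type*} [CommRing R] [IsDomain R] [UniqueFactorizationMonoid R]
    [Field K] [Algebra R K] [IsFractionRing R K]
    (I : Submodule R K) (h0 : I ≠ ⊥) (hfg : I.FG)
    (hrefl : Function.Bijective (Module.Dual.eval R I)) :
    ∃ c : K, c ≠ 0 ∧ I = Submodule.span R {c} := by
  classical
  letI := UniqueFactorizationMonoid.normalizationMonoid (α := R)
  letI := UniqueFactorizationMonoid.toNormalizedGCDMonoid R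
  have inj : Function.Injective (algebraMap R K) := IsFractionRing.injective R K
  obtain ⟨S, hS⟩ := hfg
  obtain ⟨bden, hbden⟩ := IsLocalization.exist_integer_multiples (nonZeroDivisors R) S (id : K → K)
  set b : R := (bden : R) with hbdef
  have hb0 : b ≠ 0 := nonZeroDivisors.coe_ne_zero bden
  have hbK : algebraMap R K b ≠ 0 := fun h => hb0 (inj (by rw [h, map_zero]))
  have hnum : ∀ k : K, k ∈ S → ∃ n : R, algebraMap R K n = algebraMap R K b * k := by
    intro k hk
    obtain ⟨n, hn⟩ := hbden k hk
    exact ⟨n, by rw [hn]; simp [Algebra.smul_def]⟩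
  set N : K → R := fun k => if h : k ∈ S then Classical.choose (hnum k h) else 0 with hNdef
  have hN : ∀ k ∈ S, algebraMap R K (N k) = algebraMap R K b * k := by
    intro k hk
    simp only [hNdef, dif_pos hk]
    exact Classical.choose_spec (hnum k hk)
  set g : R := S.gcd N with hgdef
  -- a nonzero element of S
  have hex : ∃ k₀ ∈ S, k₀ ≠ (0 : K) := by
    by_contra h
    push_neg at h
    apply h0
    rw [← hS, ← le_bot_iff, Submodule.span_le]
    intro x hx
    simp [h x hx]
  obtain ⟨k₀, hk₀S, hk₀0⟩ := hex
  have hk₀I : k₀ ∈ I := by rw [← hS]; exact Submodule.subset_span hk₀S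
  have hg0 : g ≠ 0 := by
    intro h
    have := Finset.gcd_eq_zero_iff.mp h k₀ hk₀S
    have h2 : algebraMap R K (N k₀) = 0 := by rw [this, map_zero]
    rw [hN k₀ hk₀S] at h2
    exact (mul_ne_zero hbK hk₀0) h2
  have hgK : algebraMap R K g ≠ 0 := fun h => hg0 (inj (by rw [h, map_zero]))
  set c : K := algebraMap R K g / algebraMap R K b with hcdef
  have hc0 : c ≠ 0 := div_ne_zero hgK hbK
  set y₀ : K := algebraMap R K b / algebraMap R K g with hy₀def
  have hy₀0 : y₀ ≠ 0 := div_ne_zero hbK hgK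
  -- Step A : multiplication by y₀ maps I into R
  have hIy : ∀ k ∈ I, ∃ e : R, y₀ * k = algebraMap R K e := by
    have hM : I ≤ {
        carrier := {k : K | ∃ e : R, y₀ * k = algebraMap R K e}
        add_mem' := by
          rintro x y ⟨e, he⟩ ⟨f, hf⟩
          exact ⟨e + f, by rw [mul_add, he, hf, map_add]⟩
        zero_mem' := ⟨0, by simp⟩
        smul_mem' := by
          rintro r x ⟨e, he⟩
          refine ⟨r * e, ?_⟩
          rw [Algebra.smul_def, map_mul, ← he]; ring } := by
      rw [← hS, Submodule.span_le]
      intro k hk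
      obtain ⟨u, hu⟩ := Finset.gcd_dvd (f := N) (Finset.mem_coe.mp hk)
      refine ⟨u, ?_⟩
      have h1 : algebraMap R K (N k) = algebraMap R K g * algebraMap R K u := by
        rw [hu, map_mul]
      have h2 : algebraMap R K b * k = algebraMap R K g * algebraMap R K u := by
        rw [← hN k hk, h1]
      rw [hy₀def]
      rw [div_mul_eq_mul_div, h2, mul_comm, mul_div_assoc, div_self hgK, mul_one]
    exact fun k hk => hM hk
  -- the multiplier of a functional
  set X : Module.Dual R I → K := fun φ => algebraMap R K (φ ⟨k₀, hk₀I⟩) / k₀ with hXdef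
  have hX : ∀ (φ : Module.Dual R I) (x : I), algebraMap R K (φ x) = X φ * (x : K) := by
    intro φ x
    rcases eq_or_ne (x : K) 0 with hx | hx
    · have hx0 : x = 0 := Subtype.ext hx
      rw [hx0]; simp
    · obtain ⟨r, t, ht, hrt⟩ := IsFractionRing.div_surjective (A := R) ((x : K) / k₀)
      have ht0 : t ≠ 0 := nonZeroDivisors.ne_zero ht
      have htK : algebraMap R K t ≠ 0 := fun h => ht0 (inj (by rw [h, map_zero]))
      rw [div_eq_div_iff htK hk₀0] at hrt
      -- hrt : algebraMap r * k₀ = (x : K) * algebraMap t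
      have hsmul : t • x = r • (⟨k₀, hk₀I⟩ : I) := by
        apply Subtype.ext
        rw [SetLike.val_smul, SetLike.val_smul, Algebra.smul_def, Algebra.smul_def]
        rw [mul_comm ((x:K)) _] at hrt
        exact hrt.symm
      have hφ : t * φ x = r * φ ⟨k₀, hk₀I⟩ := by
        have := congrArg φ hsmul
        rwa [map_smul, map_smul, smul_eq_mul, smul_eq_mul] at this
      have hφK : algebraMap R K t * algebraMap R K (φ x)
          = algebraMap R K r * algebraMap R K (φ ⟨k₀, hk₀I⟩) := by
        rw [← map_mul, ← map_mul, hφ]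
      apply mul_left_cancel₀ htK
      rw [hφK, hXdef]
      field_simp
      linear_combination algebraMap R K (φ ⟨k₀, hk₀I⟩) * hrt
  have hXadd : ∀ φ ψ : Module.Dual R I, X (φ + ψ) = X φ + X ψ := by
    intro φ ψ
    simp only [hXdef, LinearMap.add_apply, map_add, add_div]
  have hXsmul : ∀ (r : R) (φ : Module.Dual R I), X (r • φ) = algebraMap R K r * X φ := by
    intro r φ
    simp only [hXdef, LinearMap.smul_apply, smul_eq_mul, map_mul, mul_div_assoc]
  -- X φ * c is integral
  have hXc : ∀ φ : Module.Dual R I, ∃ e : R, X φ * c = algebraMap R K e := by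
    intro φ
    obtain ⟨n, m, hm, hnm⟩ := IsFractionRing.div_surjective (A := R) (X φ)
    have hm0 : m ≠ 0 := nonZeroDivisors.ne_zero hm
    have hmK : algebraMap R K m ≠ 0 := fun h => hm0 (inj (by rw [h, map_zero]))
    have key : ∀ k ∈ S, m * b ∣ n * N k := by
      intro k hk
      have hkI : k ∈ I := by rw [← hS]; exact Submodule.subset_span hk
      have h1 : algebraMap R K (φ ⟨k, hkI⟩) = X φ * k := hX φ ⟨k, hkI⟩
      refine ⟨φ ⟨k, hkI⟩, inj ?_⟩
      rw [map_mul, map_mul, map_mul, hN k hk, h1, ← hnm]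
      field_simp
    have key2 : m * b ∣ n * g := by
      have h3 : m * b ∣ S.gcd (fun k => n * N k) := Finset.dvd_gcd key
      exact (Associated.dvd_iff_dvd_right (Finset.gcd_mul_left' S N n)).mp h3
    obtain ⟨e, he⟩ := key2
    refine ⟨e, ?_⟩
    have heK : algebraMap R K (n * g) = algebraMap R K (m * b * e) := by rw [he]
    rw [map_mul, map_mul, map_mul] at heK
    rw [← hnm, hcdef]
    field_simp
    linear_combination heK
  choose E hE using hXc
  have hEadd : ∀ φ ψ : Module.Dual R I, E (φ + ψ) = E φ + E ψ := by
    intro φ ψ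
    apply inj
    rw [map_add, ← hE, ← hE, ← hE, hXadd, add_mul]
  have hEsmul : ∀ (r : R) (φ : Module.Dual R I), E (r • φ) = r * E φ := by
    intro r φ
    apply inj
    rw [map_mul, ← hE, ← hE, hXsmul, mul_assoc]
  obtain ⟨kc, hkc⟩ := hrefl.2
    { toFun := E
      map_add' := hEadd
      map_smul' := hEsmul }
  have hkcφ : ∀ φ : Module.Dual R I, algebraMap R K (φ kc) = X φ * c := by
    intro φ
    have h5 : φ kc = E φ := by
      have := DFunLike.congr_fun hkc φ
      exact this
    rw [h5, ← hE]
  -- the functional φ₀ given by multiplication by y₀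
  choose E₀ hE₀ using fun x : I => hIy (x : K) x.2
  have hE₀add : ∀ x y : I, E₀ (x + y) = E₀ x + E₀ y := by
    intro x y
    apply inj
    rw [map_add, ← hE₀, ← hE₀, ← hE₀, Submodule.coe_add, mul_add]
  have hE₀smul : ∀ (r : R) (x : I), E₀ (r • x) = r * E₀ x := by
    intro r x
    apply inj
    rw [map_mul, ← hE₀, ← hE₀, SetLike.val_smul, Algebra.smul_def]
    ring
  set φ₀ : Module.Dual R I := { toFun := E₀, map_add' := hE₀add, map_smul' := hE₀smul }
    with hφ₀def
  have hφ₀app : ∀ x : I, algebraMap R K (φ₀ x) = y₀ * (x : K) := by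
    intro x
    show algebraMap R K (E₀ x) = y₀ * (x : K)
    rw [← hE₀]
  have hXφ₀ : X φ₀ = y₀ := by
    rw [hXdef]
    show algebraMap R K (φ₀ ⟨k₀, hk₀I⟩) / k₀ = y₀
    rw [hφ₀app]
    exact mul_div_cancel_right₀ y₀ hk₀0
  have hckc : (kc : K) = c := by
    apply mul_left_cancel₀ hy₀0
    have h6 := hkcφ φ₀
    rw [hXφ₀] at h6
    rw [← h6, hφ₀app]
  have hcI : c ∈ I := hckc ▸ kc.2
  have hle : I ≤ Submodule.span R {c} := by
    rw [← hS, Submodule.span_le]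
    intro k hk
    obtain ⟨u, hu⟩ := Finset.gcd_dvd (f := N) (Finset.mem_coe.mp hk)
    have hk' : k = u • c := by
      rw [Algebra.smul_def, hcdef]
      have h7 : algebraMap R K b * k = algebraMap R K g * algebraMap R K u := by
        rw [← hN k hk, hu, map_mul]
      field_simp
      linear_combination h7
    rw [hk']
    exact Submodule.smul_mem _ u (Submodule.mem_span_singleton_self c)
  exact ⟨c, hc0, le_antisymm hle (Submodule.span_le.mpr (Set.singleton_subset_iff.mpr hcI))⟩


theorem aux_isHeightOnePrime_span {R : Type*} [CommRing R] [IsDomain R]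
    [UniqueFactorizationMonoid R] {p : R} (hp : Prime p) :
    IsHeightOnePrime (Ideal.span {p} : Ideal R) := by
  refine ⟨(Ideal.span_singleton_prime hp.ne_zero).mpr hp, ?_, ?_⟩
  · simpa [Ne, Ideal.span_singleton_eq_bot] using hp.ne_zero
  · intro q hq hlt
    by_contra hqbot
    obtain ⟨y, hyq, hy0⟩ := (Submodule.ne_bot_iff _).mp hqbot
    have hpq : p ∉ q := by
      intro hpq
      exact (ne_of_lt hlt)
        (le_antisymm (le_of_lt hlt) ((Ideal.span_singleton_le_iff_mem _).mpr hpq))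
    have key : ∀ n : ℕ, ∃ z ∈ q, y = p ^ n * z := by
      intro n
      induction n with
      | zero => exact ⟨y, hyq, by simp⟩
      | succ n ih =>
        obtain ⟨z, hzq, hz⟩ := ih
        obtain ⟨w, hw⟩ := Ideal.mem_span_singleton.mp (le_of_lt hlt hzq)
        have hwq : w ∈ q := ((hq.mem_or_mem (hw ▸ hzq)).resolve_left hpq)
        exact ⟨w, hwq, by rw [hz, hw, pow_succ]; ring⟩
    obtain ⟨n, hn⟩ := FiniteMultiplicity.of_prime_left hp hy0
    obtain ⟨z, _, hz⟩ := key (n + 1)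
    exact hn ⟨z, hz⟩

theorem aux_J_le_span {R K V G : Type*} [CommRing R] [IsDomain R]
    [Field K] [Algebra R K] [IsFractionRing R K]
    [AddCommGroup V] [Module K V] [Module R V] [IsScalarTower R K V] [Group G]
    (ρ : Representation K G V) (tr : G → R) (J : Ideal R)
    (hJ : ∀ I : Ideal R, J ≤ I ↔ ∃ ϑ ϑ' : G →* (R ⧸ I)ˣ,
      ∀ g, Ideal.Quotient.mk I (tr g) = (ϑ g : R ⧸ I) + (ϑ' g : R ⧸ I))
    (p : R) (v₁ v₂ : V)
    (hind : ∀ x y : K, x • v₁ + y • v₂ = 0 → x = 0 ∧ y = 0)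
    (a c b d : G → R)
    (h1 : ∀ g, ρ g v₁ = a g • v₁ + c g • v₂)
    (h2 : ∀ g, ρ g v₂ = b g • v₁ + d g • v₂)
    (htr : ∀ g, tr g = a g + d g)
    (hdvd : (∀ g, p ∣ b g) ∨ (∀ g, p ∣ c g)) :
    J ≤ Ideal.span {p} := by
  have inj : Function.Injective (algebraMap R K) := IsFractionRing.injective R K
  -- uniqueness of R-coordinates
  have hu : ∀ x y x' y' : R, x • v₁ + y • v₂ = x' • v₁ + y' • v₂ → x = x' ∧ y = y' := by
    intro x y x' y' hxy
    have : (algebraMap R K x - algebraMap R K x') • v₁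
        + (algebraMap R K y - algebraMap R K y') • v₂ = 0 := by
      rw [sub_smul, sub_smul]
      rw [← algebraMap_smul K x v₁, ← algebraMap_smul K y v₂,
        ← algebraMap_smul K x' v₁, ← algebraMap_smul K y' v₂] at hxy
      rw [sub_add_sub_comm, hxy, sub_self]
    obtain ⟨e1, e2⟩ := hind _ _ this
    exact ⟨inj (by rw [sub_eq_zero] at e1; exact e1), inj (by rw [sub_eq_zero] at e2; exact e2)⟩
  -- multiplicativity relations
  have expand : ∀ g h : G, ρ (g * h) v₁ = (a h * a g + c h * b g) • v₁
      + (a h * c g + c h * d g) • v₂ ∧ ρ (g * h) v₂ = (b h * a g + d h * b g) • v₁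
      + (b h * c g + d h * d g) • v₂ := by
    intro g h
    have e1 : ρ (g * h) v₁ = ρ g (ρ h v₁) := by rw [map_mul]; rfl
    have e2 : ρ (g * h) v₂ = ρ g (ρ h v₂) := by rw [map_mul]; rfl
    constructor
    · rw [e1, h1 h, map_add, LinearMap.map_smul_of_tower, LinearMap.map_smul_of_tower,
        h1 g, h2 g, smul_add, smul_add, smul_smul, smul_smul, smul_smul, smul_smul,
        add_smul, add_smul]
      abel
    · rw [e2, h2 h, map_add, LinearMap.map_smul_of_tower, LinearMap.map_smul_of_tower,
        h1 g, h2 g, smul_add, smul_add, smul_smul, smul_smul, smul_smul, smul_smul,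
        add_smul, add_smul]
      abel
  have amul : ∀ g h : G, a (g * h) = a h * a g + c h * b g := by
    intro g h
    exact (hu _ _ _ _ ((h1 (g*h)).symm.trans (expand g h).1)).1
  have dmul : ∀ g h : G, d (g * h) = b h * c g + d h * d g := by
    intro g h
    exact (hu _ _ _ _ ((h2 (g*h)).symm.trans (expand g h).2)).2
  have hone : a 1 = 1 ∧ c 1 = 0 ∧ b 1 = 0 ∧ d 1 = 1 := by
    have e1 : ρ (1 : G) v₁ = (1 : R) • v₁ + (0 : R) • v₂ := by
      rw [map_one]; simp
    have e2 : ρ (1 : G) v₂ = (0 : R) • v₁ + (1 : R) • v₂ := by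
      rw [map_one]; simp
    obtain ⟨ha, hc⟩ := hu _ _ _ _ ((h1 1).symm.trans e1)
    obtain ⟨hb, hd⟩ := hu _ _ _ _ ((h2 1).symm.trans e2)
    exact ⟨ha, hc, hb, hd⟩
  set q := Ideal.Quotient.mk (Ideal.span {p}) with hqdef
  have hq0 : ∀ r : R, p ∣ r → q r = 0 := by
    intro r hr
    rw [Ideal.Quotient.eq_zero_iff_mem]
    exact Ideal.mem_span_singleton.mpr hr
  have hcb : ∀ g h : G, q (c h * b g) = 0 := by
    intro g h
    rcases hdvd with hb' | hc'
    · rw [map_mul, hq0 _ (hb' g), mul_zero]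
    · rw [map_mul, hq0 _ (hc' h), zero_mul]
  have hbc : ∀ g h : G, q (b h * c g) = 0 := by
    intro g h
    rcases hdvd with hb' | hc'
    · rw [map_mul, hq0 _ (hb' h), zero_mul]
    · rw [map_mul, hq0 _ (hc' g), mul_zero]
  have aqmul : ∀ g h : G, q (a (g * h)) = q (a g) * q (a h) := by
    intro g h
    rw [amul, map_add, map_mul, hcb g h, add_zero, mul_comm]
  have dqmul : ∀ g h : G, q (d (g * h)) = q (d g) * q (d h) := by
    intro g h
    rw [dmul, map_add, hbc g h, zero_add, map_mul, mul_comm]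
  have aone : q (a 1) = 1 := by rw [hone.1, map_one]
  have done' : q (d 1) = 1 := by rw [hone.2.2.2, map_one]
  have ainv : ∀ g : G, q (a g) * q (a g⁻¹) = 1 := by
    intro g
    rw [mul_comm, ← aqmul g⁻¹ g, inv_mul_cancel g, aone]
  have dinv : ∀ g : G, q (d g) * q (d g⁻¹) = 1 := by
    intro g
    rw [mul_comm, ← dqmul g⁻¹ g, inv_mul_cancel g, done']
  refine (hJ (Ideal.span {p})).mpr ?_
  refine ⟨{ toFun := fun g => ⟨q (a g), q (a g⁻¹), ainv g, by rw [mul_comm]; exact ainv g⟩,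
            map_one' := by ext; simp [aone],
            map_mul' := by intro g h; ext; exact aqmul g h },
          { toFun := fun g => ⟨q (d g), q (d g⁻¹), dinv g, by rw [mul_comm]; exact dinv g⟩,
            map_one' := by ext; simp [done'],
            map_mul' := by intro g h; ext; exact dqmul g h }, ?_⟩
  intro g
  show q (tr g) = q (a g) + q (d g)
  rw [htr g, map_add]

theorem aux_matrix_CH {K : Type*} [CommRing K] (M : Matrix (Fin 2) (Fin 2) K) :
    M * M - M.trace • M + M.det • (1 : Matrix (Fin 2) (Fin 2) K) = 0 := by
  ext i j
  fin_cases i <;> fin_cases j <;>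
    simp [Matrix.mul_apply, Matrix.trace_fin_two, Matrix.det_fin_two, Fin.sum_univ_two,
      Matrix.one_apply] <;> ring

theorem aux_endo_CH {K V : Type*} [Field K] [AddCommGroup V] [Module K V]
    [FiniteDimensional K V] (h2 : Module.finrank K V = 2) (f : V →ₗ[K] V) :
    f ∘ₗ f - (LinearMap.trace K V f) • f + (LinearMap.det f) • (LinearMap.id : V →ₗ[K] V) = 0 := by
  let b : Module.Basis (Fin 2) K V := (Module.finBasis K V).reindex (finCongr h2)
  apply (LinearMap.toMatrix b b).injective
  have h := aux_matrix_CH ((LinearMap.toMatrix b b) f)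
  rw [LinearMap.det_toMatrix b] at h
  rw [map_add, map_sub, map_smul, map_smul, map_zero, LinearMap.toMatrix_comp b b b,
    LinearMap.toMatrix_id, LinearMap.trace_eq_matrix_trace K b]
  exact h


set_option maxHeartbeats 2000000 in
/-- Let `R` be a complete local UFD of residue characteristic `≠ 2` and
`ρ` a two-dimensional irreducible, residually disjoint reducible representation with a
stable free lattice, with ideal of reducibility `J`. If the set `N` of height-one primes
at which `J` is locally proper is empty (i.e. `J` is contained in no height-one prime),
then any two `G`-stable reflexive lattices of `V` are homothetic. -/
theorem stable_lattices_homothetic_of_N_empty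
    {R K V G : Type*} [CommRing R] [IsDomain R] [IsLocalRing R]
    [UniqueFactorizationMonoid R] [IsAdicComplete (maximalIdeal R) R]
    [Field K] [Algebra R K] [IsFractionRing R K]
    [AddCommGroup V] [Module K V] [Module R V] [IsScalarTower R K V] [Group G]
    (hchar : ringChar (R ⧸ maximalIdeal R) ≠ 2)
    (hdim : Module.finrank K V = 2)
    (ρ : Representation K G V)
    (hirr : ∀ W : Submodule K V, (∀ g : G, ∀ v ∈ W, ρ g v ∈ W) → W = ⊥ ∨ W = ⊤)
    (T₀ : Submodule R V) (hT₀fg : T₀.FG) (hT₀span : Submodule.span K (T₀ : Set V) = ⊤)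
    (hT₀stab : ∀ g : G, ∀ v ∈ T₀, ρ g v ∈ T₀) (hT₀free : Module.Free R T₀)
    (tr : G → R) (htr : ∀ g, algebraMap R K (tr g) = LinearMap.trace K V (ρ g))
    (ψ ψ' : G →* (R ⧸ maximalIdeal R)ˣ) (hdist : ψ ≠ ψ')
    (hred : ∀ g, Ideal.Quotient.mk (maximalIdeal R) (tr g)
      = (ψ g : R ⧸ maximalIdeal R) + (ψ' g : R ⧸ maximalIdeal R))
    (J : Ideal R)
    (hJ : ∀ I : Ideal R, J ≤ I ↔ ∃ ϑ ϑ' : G →* (R ⧸ I)ˣ,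
      ∀ g, Ideal.Quotient.mk I (tr g) = (ϑ g : R ⧸ I) + (ϑ' g : R ⧸ I))
    (hNempty : ∀ q : Ideal R, IsHeightOnePrime q → ¬ J ≤ q) :
    ∀ T T' : Submodule R V,
      T.FG → Submodule.span K (T : Set V) = ⊤ → (∀ g : G, ∀ v ∈ T, ρ g v ∈ T) →
      Function.Bijective (Module.Dual.eval R T) →
      T'.FG → Submodule.span K (T' : Set V) = ⊤ → (∀ g : G, ∀ v ∈ T', ρ g v ∈ T') →
      Function.Bijective (Module.Dual.eval R T') →
      Homothetic R K T T' := by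
  intro T T' hTfg hTspan hTstab hTrefl hT'fg hT'span hT'stab hT'refl
  classical
  have inj : Function.Injective (algebraMap R K) := IsFractionRing.injective R K
  haveI : FiniteDimensional K V := Module.finite_of_finrank_eq_succ (n := 1) (by rw [hdim])
  set mk := Ideal.Quotient.mk (maximalIdeal R) with hmkdef
  -- 2 is a unit in R
  have h2unit : IsUnit (2 : R) := by
    rw [← IsLocalRing.notMem_maximalIdeal]
    intro h2m
    haveI : Nontrivial (R ⧸ maximalIdeal R) :=
      Ideal.Quotient.nontrivial_iff.mpr (Ideal.IsMaximal.ne_top (IsLocalRing.maximalIdeal.isMaximal R))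
    have hz : ((2 : ℕ) : R ⧸ maximalIdeal R) = 0 := by
      have : mk 2 = 0 := Ideal.Quotient.eq_zero_iff_mem.mpr h2m
      simpa [hmkdef, map_ofNat] using this
    rcases (Nat.dvd_prime Nat.prime_two).mp (ringChar.dvd hz) with h1 | h1
    · exact CharP.ringChar_ne_one h1
    · exact hchar h1
  -- g₀ with distinct residual characters
  have hg₀ex : ∃ g₀ : G, ψ g₀ ≠ ψ' g₀ := by
    by_contra h
    push_neg at h
    exact hdist (MonoidHom.ext h)
  obtain ⟨g₀, hg₀⟩ := hg₀ex
  obtain ⟨w, hw⟩ := Ideal.Quotient.mk_surjective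
    (((ψ g₀ : (R ⧸ maximalIdeal R)ˣ) : R ⧸ maximalIdeal R)
      - ((ψ' g₀ : (R ⧸ maximalIdeal R)ˣ) : R ⧸ maximalIdeal R))
  have hwne : mk w ≠ 0 := by
    rw [hw, sub_ne_zero]
    exact fun h => hg₀ (Units.ext h)
  have hwm : w ∉ maximalIdeal R := fun h => hwne (Ideal.Quotient.eq_zero_iff_mem.mpr h)
  have hwunit : IsUnit w := IsLocalRing.notMem_maximalIdeal.mp hwm
  have hδmk : mk (2 * tr (g₀ * g₀) - tr g₀ ^ 2) = (mk w) ^ 2 := by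
    have e1 := hred (g₀ * g₀)
    have e2 := hred g₀
    rw [map_mul ψ, map_mul ψ', Units.val_mul, Units.val_mul] at e1
    rw [map_sub, map_mul, map_pow, e1, e2, hw]
    have h2 : mk 2 = 2 := map_ofNat mk 2
    rw [h2]
    ring
  have hδm : (2 * tr (g₀ * g₀) - tr g₀ ^ 2) ∉ maximalIdeal R := by
    intro hδ
    have h0 : mk (w ^ 2) = 0 := by
      rw [map_pow, ← hδmk]
      exact Ideal.Quotient.eq_zero_iff_mem.mpr hδ
    exact hwm ((Ideal.IsMaximal.isPrime (IsLocalRing.maximalIdeal.isMaximal R)).mem_of_pow_mem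
      2 (Ideal.Quotient.eq_zero_iff_mem.mp h0))
  -- Hensel: a square root s of the discriminant
  obtain ⟨s, hsroot, hscong⟩ := (IsAdicComplete.henselianRing R (maximalIdeal R)).is_henselian
    (Polynomial.X ^ 2 - Polynomial.C (2 * tr (g₀ * g₀) - tr g₀ ^ 2))
    (Polynomial.monic_X_pow_sub_C _ two_ne_zero) w
    (by
      have he : Polynomial.eval w (Polynomial.X ^ 2
          - Polynomial.C (2 * tr (g₀ * g₀) - tr g₀ ^ 2))
          = w ^ 2 - (2 * tr (g₀ * g₀) - tr g₀ ^ 2) := by simp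
      rw [he]
      apply Ideal.Quotient.eq_zero_iff_mem.mp
      rw [map_sub, map_pow, hδmk, sub_self])
    (by
      have hder : Polynomial.derivative (Polynomial.X ^ 2
          - Polynomial.C (2 * tr (g₀ * g₀) - tr g₀ ^ 2))
          = Polynomial.C 2 * Polynomial.X := by
        rw [Polynomial.derivative_sub, Polynomial.derivative_C, Polynomial.derivative_X_pow]
        norm_num
      rw [hder]
      have he : Polynomial.eval w (Polynomial.C 2 * Polynomial.X) = 2 * w := by simp
      rw [he, map_mul]
      exact (h2unit.map mk).mul (hwunit.map mk))
  have hs2 : s ^ 2 = 2 * tr (g₀ * g₀) - tr g₀ ^ 2 := by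
    have := hsroot
    simp only [Polynomial.IsRoot, Polynomial.eval_sub, Polynomial.eval_pow,
      Polynomial.eval_X, Polynomial.eval_C] at this
    exact sub_eq_zero.mp this
  have hsunit : IsUnit s := by
    rw [← IsLocalRing.notMem_maximalIdeal]
    intro hsm
    apply hwne
    have h1 : mk s = 0 := Ideal.Quotient.eq_zero_iff_mem.mpr hsm
    have h2 : mk (s - w) = 0 := Ideal.Quotient.eq_zero_iff_mem.mpr hscong
    rw [map_sub, h1, zero_sub, neg_eq_zero] at h2
    exact h2
  -- inverses
  set h2inv : R := ((h2unit.unit⁻¹ : Rˣ) : R) with h2invdef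
  have h2half : 2 * h2inv = 1 := by
    have := h2unit.unit.mul_inv
    rwa [IsUnit.unit_spec] at this
  set sinv : R := ((hsunit.unit⁻¹ : Rˣ) : R) with hsinvdef
  have hssinv : s * sinv = 1 := by
    have := hsunit.unit.mul_inv
    rwa [IsUnit.unit_spec] at this
  -- eigenvalues
  set α : R := (tr g₀ + s) * h2inv with hαdef
  set β : R := (tr g₀ - s) * h2inv with hβdef
  have hsum : α + β = tr g₀ := by rw [hαdef, hβdef]; linear_combination (tr g₀) * h2half
  have hdiff : α - β = s := by rw [hαdef, hβdef]; linear_combination s * h2half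
  -- the determinant as an element of R
  set d : R := (tr g₀ * tr g₀ - tr (g₀ * g₀)) * h2inv with hddef
  have hd2 : d * 2 = tr g₀ * tr g₀ - tr (g₀ * g₀) := by
    rw [hddef]; linear_combination (tr g₀ * tr g₀ - tr (g₀ * g₀)) * h2half
  have hCH := aux_endo_CH hdim (ρ g₀)
  have htr2 : LinearMap.trace K V (ρ g₀ ∘ₗ ρ g₀) = algebraMap R K (tr (g₀ * g₀)) := by
    have h := htr (g₀ * g₀)
    rw [map_mul] at h
    exact h.symm
  have htraceid : LinearMap.trace K V (LinearMap.id : V →ₗ[K] V) = 2 := by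
    rw [show (LinearMap.id : V →ₗ[K] V) = 1 from rfl, LinearMap.trace_one, hdim]
    norm_num
  have h0 : LinearMap.trace K V (ρ g₀ ∘ₗ ρ g₀)
      - LinearMap.trace K V ((LinearMap.trace K V (ρ g₀)) • ρ g₀)
      + LinearMap.trace K V ((LinearMap.det (ρ g₀)) • LinearMap.id) = 0 := by
    rw [← map_sub, ← map_add, hCH, map_zero]
  rw [map_smul, map_smul, smul_eq_mul, smul_eq_mul, htr2, ← htr g₀, htraceid] at h0
  have h2K : (2 : K) ≠ 0 := by
    intro h
    have h' : algebraMap R K 2 = 0 := by rw [map_ofNat]; exact_mod_cast h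
    exact h2unit.ne_zero (inj (by rw [h', map_zero]))
  have hdet : LinearMap.det (ρ g₀) = algebraMap R K d := by
    apply mul_right_cancel₀ h2K
    have hd2K : algebraMap R K d * 2 = algebraMap R K (tr g₀) * algebraMap R K (tr g₀)
        - algebraMap R K (tr (g₀ * g₀)) := by
      rw [show (2:K) = algebraMap R K 2 from (map_ofNat _ 2).symm, ← map_mul, ← map_mul,
        ← map_sub, hd2]
    rw [hd2K]
    linear_combination h0
  have hprod : α * β = d := by
    rw [hαdef, hβdef, hddef]
    linear_combination (-(h2inv^2)) * hs2 + ((tr g₀ * tr g₀ - tr (g₀ * g₀)) * h2inv) * h2half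
  -- scalars in K
  set aα : K := algebraMap R K α with haαdef
  set aβ : K := algebraMap R K β with haβdef
  set su : K := algebraMap R K sinv with hsudef
  have e1 : algebraMap R K (tr g₀) = aα + aβ := by rw [← hsum, map_add]
  have e2 : algebraMap R K d = aα * aβ := by rw [← hprod, map_mul]
  have hsudiff : su * (aα - aβ) = 1 := by
    rw [hsudef, haαdef, haβdef, ← map_sub, hdiff, ← map_mul, mul_comm sinv s, hssinv, map_one]
  -- pointwise Cayley–Hamilton
  have hCHx : ∀ x : V, ρ g₀ (ρ g₀ x) = (aα + aβ) • ρ g₀ x - (aα * aβ) • x := by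
    intro x
    have h := DFunLike.congr_fun hCH x
    simp only [LinearMap.add_apply, LinearMap.sub_apply, LinearMap.coe_comp,
      Function.comp_apply, LinearMap.smul_apply, LinearMap.id_apply,
      LinearMap.zero_apply] at h
    rw [hdet, ← htr g₀, e1, e2] at h
    have h' : ρ g₀ (ρ g₀ x) - ((aα + aβ) • ρ g₀ x - (aα * aβ) • x) = 0 := by
      rw [← h]; abel
    exact sub_eq_zero.mp h'
  -- the projectors
  set π₁ : V →ₗ[K] V := su • ((ρ g₀ : V →ₗ[K] V) - aβ • LinearMap.id) with hπ₁def
  set π₂ : V →ₗ[K] V := su • (aα • LinearMap.id - (ρ g₀ : V →ₗ[K] V)) with hπ₂def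
  have hπ₁x : ∀ x, π₁ x = su • (ρ g₀ x - aβ • x) := by
    intro x; rw [hπ₁def]; simp
  have hπ₂x : ∀ x, π₂ x = su • (aα • x - ρ g₀ x) := by
    intro x; rw [hπ₂def]; simp
  have hsumx : ∀ x, π₁ x + π₂ x = x := by
    intro x
    rw [hπ₁x, hπ₂x]
    have h : su • (ρ g₀ x - aβ • x) + su • (aα • x - ρ g₀ x) = (su * (aα - aβ)) • x := by
      module
    rw [h, hsudiff, one_smul]
  have hπ₁π₂ : ∀ x, π₁ (π₂ x) = 0 := by
    intro x
    rw [hπ₁x, hπ₂x, map_smul, map_sub, map_smul, hCHx x]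
    module
  have hπ₂π₁ : ∀ x, π₂ (π₁ x) = 0 := by
    intro x
    rw [hπ₂x, hπ₁x, map_smul, map_sub, map_smul, hCHx x]
    module
  have hπ₁idem : ∀ x, π₁ (π₁ x) = π₁ x := by
    intro x
    have h1 : π₁ x = x - π₂ x := eq_sub_of_add_eq (hsumx x)
    calc π₁ (π₁ x) = π₁ (x - π₂ x) := by rw [← h1]
    _ = π₁ x - π₁ (π₂ x) := by rw [map_sub]
    _ = π₁ x := by rw [hπ₁π₂, sub_zero]
  have hπ₂idem : ∀ x, π₂ (π₂ x) = π₂ x := by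
    intro x
    have h1 : π₂ x = x - π₁ x := eq_sub_of_add_eq' (hsumx x)
    calc π₂ (π₂ x) = π₂ (x - π₁ x) := by rw [← h1]
    _ = π₂ x - π₂ (π₁ x) := by rw [map_sub]
    _ = π₂ x := by rw [hπ₂π₁, sub_zero]
  have htrπ₁ : LinearMap.trace K V π₁ = 1 := by
    rw [hπ₁def, map_smul, map_sub, map_smul, ← htr g₀, htraceid, smul_eq_mul, smul_eq_mul, e1]
    linear_combination hsudiff
  have htrπ₂ : LinearMap.trace K V π₂ = 1 := by
    rw [hπ₂def, map_smul, map_sub, map_smul, ← htr g₀, htraceid, smul_eq_mul, smul_eq_mul, e1]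
    linear_combination hsudiff
  have hπ₁ne : π₁ ≠ 0 := fun h => zero_ne_one (by rw [h, map_zero] at htrπ₁; exact htrπ₁)
  have hπ₂ne : π₂ ≠ 0 := fun h => zero_ne_one (by rw [h, map_zero] at htrπ₂; exact htrπ₂)
  -- the eigenlines
  set W₁ : Submodule K V := LinearMap.range π₁ with hW₁def
  set W₂ : Submodule K V := LinearMap.range π₂ with hW₂def
  have hdisj : ∀ x : V, x ∈ W₁ → x ∈ W₂ → x = 0 := by
    intro x hx1 hx2
    obtain ⟨u, hu⟩ := hx1
    obtain ⟨u', hu'⟩ := hx2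
    have h1 : π₁ x = x := by rw [← hu, hπ₁idem]
    have h2 : π₁ x = 0 := by rw [← hu', hπ₁π₂]
    rw [← h1, h2]
  have hinf : W₁ ⊓ W₂ = ⊥ := by
    rw [eq_bot_iff]
    rintro x ⟨hx1, hx2⟩
    simpa using hdisj x hx1 hx2
  have hsupW : W₁ ⊔ W₂ = ⊤ := by
    rw [eq_top_iff]
    intro x _
    exact Submodule.mem_sup.mpr ⟨π₁ x, ⟨x, rfl⟩, π₂ x, ⟨x, rfl⟩, hsumx x⟩
  have hrank : Module.finrank K W₁ + Module.finrank K W₂ = 2 := by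
    have h := Submodule.finrank_sup_add_finrank_inf_eq W₁ W₂
    rw [hsupW, hinf, finrank_top, hdim, finrank_bot] at h
    omega
  have hW₁ne : W₁ ≠ ⊥ := fun h => hπ₁ne (LinearMap.range_eq_bot.mp h)
  have hW₂ne : W₂ ≠ ⊥ := fun h => hπ₂ne (LinearMap.range_eq_bot.mp h)
  have hW₁rank : Module.finrank K W₁ = 1 := by
    have h1 : Module.finrank K W₁ ≠ 0 := fun h => hW₁ne (Submodule.finrank_eq_zero.mp h)
    have h2 : Module.finrank K W₂ ≠ 0 := fun h => hW₂ne (Submodule.finrank_eq_zero.mp h)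
    omega
  have hW₂rank : Module.finrank K W₂ = 1 := by
    have h1 : Module.finrank K W₁ ≠ 0 := fun h => hW₁ne (Submodule.finrank_eq_zero.mp h)
    have h2 : Module.finrank K W₂ ≠ 0 := fun h => hW₂ne (Submodule.finrank_eq_zero.mp h)
    omega
  obtain ⟨e₁, he₁W, he₁0⟩ := (Submodule.ne_bot_iff W₁).mp hW₁ne
  obtain ⟨e₂, he₂W, he₂0⟩ := (Submodule.ne_bot_iff W₂).mp hW₂ne
  have hWspan1 : W₁ = Submodule.span K {e₁} := by
    symm
    apply Submodule.eq_of_le_of_finrank_le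
    · rw [Submodule.span_le]; exact Set.singleton_subset_iff.mpr he₁W
    · rw [finrank_span_singleton he₁0, hW₁rank]
  have hWspan2 : W₂ = Submodule.span K {e₂} := by
    symm
    apply Submodule.eq_of_le_of_finrank_le
    · rw [Submodule.span_le]; exact Set.singleton_subset_iff.mpr he₂W
    · rw [finrank_span_singleton he₂0, hW₂rank]
  -- every stable reflexive lattice decomposes
  have key : ∀ S : Submodule R V, (∀ g : G, ∀ v ∈ S, ρ g v ∈ S) → S.FG →
      Submodule.span K (S : Set V) = ⊤ → Function.Bijective (Module.Dual.eval R S) →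
      ∃ c₁ c₂ : K, c₁ ≠ 0 ∧ c₂ ≠ 0 ∧
        S = Submodule.span R {c₁ • e₁} ⊔ Submodule.span R {c₂ • e₂} := by
    intro S hstab hfg hspan hrefl
    have hπmem : ∀ v ∈ S, π₁ v ∈ S ∧ π₂ v ∈ S := by
      intro v hv
      have hγ : ρ g₀ v ∈ S := hstab g₀ v hv
      constructor
      · have hrw : π₁ v = sinv • ρ g₀ v - (sinv * β) • v := by
          rw [hπ₁x, smul_sub, smul_smul, hsudef, haβdef, ← map_mul,
            algebraMap_smul, algebraMap_smul]
        rw [hrw]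
        exact S.sub_mem (S.smul_mem sinv hγ) (S.smul_mem _ hv)
      · have hrw : π₂ v = (sinv * α) • v - sinv • ρ g₀ v := by
          rw [hπ₂x, smul_sub, smul_smul, hsudef, haαdef, ← map_mul,
            algebraMap_smul, algebraMap_smul]
        rw [hrw]
        exact S.sub_mem (S.smul_mem _ hv) (S.smul_mem sinv hγ)
    set S₁ : Submodule R V := Submodule.map (π₁.restrictScalars R) S with hS₁def
    set S₂ : Submodule R V := Submodule.map (π₂.restrictScalars R) S with hS₂def
    have hS₁le : S₁ ≤ S := by
      rintro x ⟨v, hv, rfl⟩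
      exact (hπmem v hv).1
    have hS₂le : S₂ ≤ S := by
      rintro x ⟨v, hv, rfl⟩
      exact (hπmem v hv).2
    have hdecompS : S = S₁ ⊔ S₂ := by
      apply le_antisymm
      · intro x hx
        exact Submodule.mem_sup.mpr ⟨π₁ x, ⟨x, hx, rfl⟩, π₂ x, ⟨x, hx, rfl⟩, hsumx x⟩
      · exact sup_le hS₁le hS₂le
    have hS₁ne : S₁ ≠ ⊥ := by
      intro hbot
      apply hπ₁ne
      have hker : Submodule.span K (S : Set V) ≤ LinearMap.ker π₁ := by
        rw [Submodule.span_le]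
        intro v hv
        have hmem : π₁ v ∈ S₁ := ⟨v, hv, rfl⟩
        rw [hbot] at hmem
        simpa using hmem
      rw [hspan] at hker
      exact LinearMap.ker_eq_top.mp (eq_top_iff.mpr hker)
    have hS₂ne : S₂ ≠ ⊥ := by
      intro hbot
      apply hπ₂ne
      have hker : Submodule.span K (S : Set V) ≤ LinearMap.ker π₂ := by
        rw [Submodule.span_le]
        intro v hv
        have hmem : π₂ v ∈ S₂ := ⟨v, hv, rfl⟩
        rw [hbot] at hmem
        simpa using hmem
      rw [hspan] at hker
      exact LinearMap.ker_eq_top.mp (eq_top_iff.mpr hker)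
    have hS₁W : ∀ x ∈ S₁, ∃ k : K, k • e₁ = x := by
      rintro x ⟨v, hv, rfl⟩
      have hmem : π₁ v ∈ W₁ := ⟨v, rfl⟩
      rw [hWspan1] at hmem
      exact Submodule.mem_span_singleton.mp hmem
    have hS₂W : ∀ x ∈ S₂, ∃ k : K, k • e₂ = x := by
      rintro x ⟨v, hv, rfl⟩
      have hmem : π₂ v ∈ W₂ := ⟨v, rfl⟩
      rw [hWspan2] at hmem
      exact Submodule.mem_span_singleton.mp hmem
    -- rank-one piece S₁
    obtain ⟨c₁, hc₁0, hS₁span⟩ : ∃ c₁ : K, c₁ ≠ 0 ∧ S₁ = Submodule.span R {c₁ • e₁} := by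
      set ι₁ : K →ₗ[R] V := (LinearMap.toSpanSingleton K V e₁).restrictScalars R with hι₁def
      set A : Submodule R K := Submodule.comap ι₁ S₁ with hAdef
      have hAmem : ∀ k : K, k ∈ A ↔ k • e₁ ∈ S₁ := fun k => Iff.rfl
      have hAbot : A ≠ ⊥ := by
        intro hbot
        apply hS₁ne
        rw [eq_bot_iff]
        intro x hx
        obtain ⟨k, hk⟩ := hS₁W x hx
        have hkA : k ∈ A := by rw [hAmem, hk]; exact hx
        rw [hbot, Submodule.mem_bot] at hkA
        simp [Submodule.mem_bot, ← hk, hkA]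
      set E : A →ₗ[R] S₁ := LinearMap.codRestrict S₁ (ι₁.comp A.subtype) (fun a => a.2)
        with hEdef
      have hEapp : ∀ a : A, (E a : V) = (a : K) • e₁ := fun a => rfl
      have hEbij : Function.Bijective E := by
        constructor
        · intro a b hab
          apply Subtype.ext
          have h1 : (a : K) • e₁ = (b : K) • e₁ := by
            rw [← hEapp a, ← hEapp b, hab]
          have h2 : ((a : K) - (b : K)) • e₁ = 0 := by rw [sub_smul, h1, sub_self]
          rcases smul_eq_zero.mp h2 with h | h
          · exact sub_eq_zero.mp h
          · exact absurd h he₁0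
        · rintro ⟨x, hx⟩
          obtain ⟨k, hk⟩ := hS₁W x hx
          exact ⟨⟨k, by rw [hAmem, hk]; exact hx⟩, Subtype.ext hk⟩
      haveI hS₁fin : Module.Finite R S₁ := Module.Finite.iff_fg.mpr (hfg.map _)
      haveI hAfin : Module.Finite R A :=
        Module.Finite.equiv (LinearEquiv.ofBijective E hEbij).symm
      have hAfg : A.FG := Module.Finite.iff_fg.mp hAfin
      have hS₁refl : Function.Bijective (Module.Dual.eval R S₁) := by
        refine aux_bijective_dual_eval_of_retract (Submodule.inclusion hS₁le)
          (LinearMap.codRestrict S₁ ((π₁.restrictScalars R).comp S.subtype)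
            (fun x => ⟨(x : V), x.2, rfl⟩)) ?_ hrefl
        intro x
        apply Subtype.ext
        show π₁ ((x : V)) = (x : V)
        obtain ⟨v, hv, hveq⟩ := x.2
        rw [← hveq]
        exact hπ₁idem v
      have hArefl : Function.Bijective (Module.Dual.eval R A) :=
        aux_bijective_dual_eval_of_equiv (LinearEquiv.ofBijective E hEbij).symm hS₁refl
      obtain ⟨c₁, hc₁0, hc₁span⟩ := aux_principal A hAbot hAfg hArefl
      refine ⟨c₁, hc₁0, le_antisymm ?_ ?_⟩
      · intro x hx
        obtain ⟨k, hk⟩ := hS₁W x hx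
        have hkA : k ∈ A := by rw [hAmem, hk]; exact hx
        rw [hc₁span] at hkA
        obtain ⟨r, hr⟩ := Submodule.mem_span_singleton.mp hkA
        refine Submodule.mem_span_singleton.mpr ⟨r, ?_⟩
        rw [← hk, ← hr, smul_assoc]
      · rw [Submodule.span_le, Set.singleton_subset_iff]
        have hc₁A : c₁ ∈ A := by rw [hc₁span]; exact Submodule.mem_span_singleton_self c₁
        exact (hAmem c₁).mp hc₁A
    -- rank-one piece S₂
    obtain ⟨c₂, hc₂0, hS₂span⟩ : ∃ c₂ : K, c₂ ≠ 0 ∧ S₂ = Submodule.span R {c₂ • e₂} := by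
      set ι₂ : K →ₗ[R] V := (LinearMap.toSpanSingleton K V e₂).restrictScalars R with hι₂def
      set A : Submodule R K := Submodule.comap ι₂ S₂ with hAdef
      have hAmem : ∀ k : K, k ∈ A ↔ k • e₂ ∈ S₂ := fun k => Iff.rfl
      have hAbot : A ≠ ⊥ := by
        intro hbot
        apply hS₂ne
        rw [eq_bot_iff]
        intro x hx
        obtain ⟨k, hk⟩ := hS₂W x hx
        have hkA : k ∈ A := by rw [hAmem, hk]; exact hx
        rw [hbot, Submodule.mem_bot] at hkA
        simp [Submodule.mem_bot, ← hk, hkA]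
      set E : A →ₗ[R] S₂ := LinearMap.codRestrict S₂ (ι₂.comp A.subtype) (fun a => a.2)
        with hEdef
      have hEapp : ∀ a : A, (E a : V) = (a : K) • e₂ := fun a => rfl
      have hEbij : Function.Bijective E := by
        constructor
        · intro a b hab
          apply Subtype.ext
          have h1 : (a : K) • e₂ = (b : K) • e₂ := by
            rw [← hEapp a, ← hEapp b, hab]
          have h2 : ((a : K) - (b : K)) • e₂ = 0 := by rw [sub_smul, h1, sub_self]
          rcases smul_eq_zero.mp h2 with h | h
          · exact sub_eq_zero.mp h
          · exact absurd h he₂0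
        · rintro ⟨x, hx⟩
          obtain ⟨k, hk⟩ := hS₂W x hx
          exact ⟨⟨k, by rw [hAmem, hk]; exact hx⟩, Subtype.ext hk⟩
      haveI hS₂fin : Module.Finite R S₂ := Module.Finite.iff_fg.mpr (hfg.map _)
      haveI hAfin : Module.Finite R A :=
        Module.Finite.equiv (LinearEquiv.ofBijective E hEbij).symm
      have hAfg : A.FG := Module.Finite.iff_fg.mp hAfin
      have hS₂refl : Function.Bijective (Module.Dual.eval R S₂) := by
        refine aux_bijective_dual_eval_of_retract (Submodule.inclusion hS₂le)
          (LinearMap.codRestrict S₂ ((π₂.restrictScalars R).comp S.subtype)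
            (fun x => ⟨(x : V), x.2, rfl⟩)) ?_ hrefl
        intro x
        apply Subtype.ext
        show π₂ ((x : V)) = (x : V)
        obtain ⟨v, hv, hveq⟩ := x.2
        rw [← hveq]
        exact hπ₂idem v
      have hArefl : Function.Bijective (Module.Dual.eval R A) :=
        aux_bijective_dual_eval_of_equiv (LinearEquiv.ofBijective E hEbij).symm hS₂refl
      obtain ⟨c₂, hc₂0, hc₂span⟩ := aux_principal A hAbot hAfg hArefl
      refine ⟨c₂, hc₂0, le_antisymm ?_ ?_⟩
      · intro x hx
        obtain ⟨k, hk⟩ := hS₂W x hx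
        have hkA : k ∈ A := by rw [hAmem, hk]; exact hx
        rw [hc₂span] at hkA
        obtain ⟨r, hr⟩ := Submodule.mem_span_singleton.mp hkA
        refine Submodule.mem_span_singleton.mpr ⟨r, ?_⟩
        rw [← hk, ← hr, smul_assoc]
      · rw [Submodule.span_le, Set.singleton_subset_iff]
        have hc₂A : c₂ ∈ A := by rw [hc₂span]; exact Submodule.mem_span_singleton_self c₂
        exact (hAmem c₂).mp hc₂A
    exact ⟨c₁, c₂, hc₁0, hc₂0, by rw [hdecompS, hS₁span, hS₂span]⟩
  obtain ⟨c₁, c₂, hc₁0, hc₂0, hTdec⟩ := key T hTstab hTfg hTspan hTrefl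
  obtain ⟨c₁', c₂', hc₁'0, hc₂'0, hT'dec⟩ := key T' hT'stab hT'fg hT'span hT'refl
  set v₁ : V := c₁ • e₁ with hv₁def
  set v₂ : V := c₂ • e₂ with hv₂def
  have hv₁0 : v₁ ≠ 0 := smul_ne_zero hc₁0 he₁0
  have hv₂0 : v₂ ≠ 0 := smul_ne_zero hc₂0 he₂0
  set lam : K := c₁' / c₁ with hlamdef
  set mu : K := c₂' / c₂ with hmudef
  have hlam0 : lam ≠ 0 := div_ne_zero hc₁'0 hc₁0
  have hmu0 : mu ≠ 0 := div_ne_zero hc₂'0 hc₂0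
  have hlamv : lam • v₁ = c₁' • e₁ := by
    rw [hv₁def, smul_smul, hlamdef, div_mul_cancel₀ _ hc₁0]
  have hmuv : mu • v₂ = c₂' • e₂ := by
    rw [hv₂def, smul_smul, hmudef, div_mul_cancel₀ _ hc₂0]
  have hT'dec' : T' = Submodule.span R {lam • v₁} ⊔ Submodule.span R {mu • v₂} := by
    rw [hT'dec, hlamv, hmuv]
  have hv₁W : v₁ ∈ W₁ := by
    rw [hWspan1, hv₁def]
    exact Submodule.smul_mem _ _ (Submodule.mem_span_singleton_self _)
  have hv₂W : v₂ ∈ W₂ := by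
    rw [hWspan2, hv₂def]
    exact Submodule.smul_mem _ _ (Submodule.mem_span_singleton_self _)
  clear_value v₁ v₂ lam mu
  have hind : ∀ x y : K, x • v₁ + y • v₂ = 0 → x = 0 ∧ y = 0 := by
    intro x y hxy
    have h1 : x • v₁ = -(y • v₂) := eq_neg_of_add_eq_zero_left hxy
    have hmem1 : x • v₁ ∈ W₁ := Submodule.smul_mem _ _ hv₁W
    have hmem2 : x • v₁ ∈ W₂ := by
      rw [h1]; exact Submodule.neg_mem _ (Submodule.smul_mem _ _ hv₂W)
    have h0 : x • v₁ = 0 := hdisj _ hmem1 hmem2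
    have hx0 : x = 0 := by
      rcases smul_eq_zero.mp h0 with h | h
      · exact h
      · exact absurd h hv₁0
    refine ⟨hx0, ?_⟩
    rw [hx0, zero_smul, zero_add] at hxy
    rcases smul_eq_zero.mp hxy with h | h
    · exact h
    · exact absurd h hv₂0
  have hli : LinearIndependent K ![v₁, v₂] :=
    LinearIndependent.pair_iff.mpr fun s t hst => hind s t hst
  set b : Module.Basis (Fin 2) K V := basisOfLinearIndependentOfCardEqFinrank hli
    (by simp [hdim]) with hbdef
  have hb0 : b 0 = v₁ := by
    rw [hbdef]
    simp [coe_basisOfLinearIndependentOfCardEqFinrank]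
  have hb1 : b 1 = v₂ := by
    rw [hbdef]
    simp [coe_basisOfLinearIndependentOfCardEqFinrank]
  have hv₁T : v₁ ∈ T := by
    rw [hTdec]; exact Submodule.mem_sup_left (Submodule.mem_span_singleton_self _)
  have hv₂T : v₂ ∈ T := by
    rw [hTdec]; exact Submodule.mem_sup_right (Submodule.mem_span_singleton_self _)
  have hcoord1 : ∀ g : G, ∃ aa cc : R, ρ g v₁ = aa • v₁ + cc • v₂ := by
    intro g
    have hmem : ρ g v₁ ∈ T := hTstab g v₁ hv₁T
    rw [hTdec] at hmem
    obtain ⟨y, hy, z, hz, hyz⟩ := Submodule.mem_sup.mp hmem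
    obtain ⟨aa, ha⟩ := Submodule.mem_span_singleton.mp hy
    obtain ⟨cc, hc⟩ := Submodule.mem_span_singleton.mp hz
    exact ⟨aa, cc, by rw [← hyz, ← ha, ← hc]⟩
  have hcoord2 : ∀ g : G, ∃ bb dd : R, ρ g v₂ = bb • v₁ + dd • v₂ := by
    intro g
    have hmem : ρ g v₂ ∈ T := hTstab g v₂ hv₂T
    rw [hTdec] at hmem
    obtain ⟨y, hy, z, hz, hyz⟩ := Submodule.mem_sup.mp hmem
    obtain ⟨bb, ha⟩ := Submodule.mem_span_singleton.mp hy
    obtain ⟨dd, hc⟩ := Submodule.mem_span_singleton.mp hz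
    exact ⟨bb, dd, by rw [← hyz, ← ha, ← hc]⟩
  choose aF cF hac using hcoord1
  choose bF dF hbd using hcoord2
  have htr' : ∀ g : G, tr g = aF g + dF g := by
    intro g
    apply inj
    rw [map_add, htr g]
    rw [LinearMap.trace_eq_matrix_trace K b, Matrix.trace_fin_two,
      LinearMap.toMatrix_apply, LinearMap.toMatrix_apply]
    have h00 : (b.repr (ρ g (b 0))) 0 = algebraMap R K (aF g) := by
      rw [hb0, hac g, ← algebraMap_smul K (aF g) v₁, ← algebraMap_smul K (cF g) v₂,
        ← hb0, ← hb1, map_add, map_smul, map_smul, b.repr_self, b.repr_self]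
      simp [Algebra.smul_def]
    have h11 : (b.repr (ρ g (b 1))) 1 = algebraMap R K (dF g) := by
      rw [hb1, hbd g, ← algebraMap_smul K (bF g) v₁, ← algebraMap_smul K (dF g) v₂,
        ← hb0, ← hb1, map_add, map_smul, map_smul, b.repr_self, b.repr_self]
      simp [Algebra.smul_def]
    rw [h00, h11]
  have huK : ∀ x y x' y' : K, x • v₁ + y • v₂ = x' • v₁ + y' • v₂ → x = x' ∧ y = y' := by
    intro x y x' y' hxy
    have h : (x - x') • v₁ + (y - y') • v₂ = 0 := by
      rw [sub_smul, sub_smul, sub_add_sub_comm, hxy, sub_self]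
    obtain ⟨h1, h2⟩ := hind _ _ h
    exact ⟨sub_eq_zero.mp h1, sub_eq_zero.mp h2⟩
  have hacK : ∀ g, ρ g v₁ = algebraMap R K (aF g) • v₁ + algebraMap R K (cF g) • v₂ :=
    fun g => by rw [hac g, algebraMap_smul, algebraMap_smul]
  have hbdK : ∀ g, ρ g v₂ = algebraMap R K (bF g) • v₁ + algebraMap R K (dF g) • v₂ :=
    fun g => by rw [hbd g, algebraMap_smul, algebraMap_smul]
  have hT'c : ∀ g : G, ∃ r : R, (lam / mu) * algebraMap R K (cF g) = algebraMap R K r := by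
    intro g
    have hv₁T' : lam • v₁ ∈ T' := by
      rw [hT'dec']; exact Submodule.mem_sup_left (Submodule.mem_span_singleton_self _)
    have hmem : ρ g (lam • v₁) ∈ T' := hT'stab g _ hv₁T'
    rw [hT'dec'] at hmem
    obtain ⟨y, hy, z, hz, hyz⟩ := Submodule.mem_sup.mp hmem
    obtain ⟨rr, hr⟩ := Submodule.mem_span_singleton.mp hy
    obtain ⟨rr', hr'⟩ := Submodule.mem_span_singleton.mp hz
    have hL : ρ g (lam • v₁) = (lam * algebraMap R K (aF g)) • v₁
        + (lam * algebraMap R K (cF g)) • v₂ := by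
      rw [map_smul, hacK g, smul_add, smul_smul, smul_smul]
    have hR : rr • (lam • v₁) + rr' • (mu • v₂)
        = (algebraMap R K rr * lam) • v₁ + (algebraMap R K rr' * mu) • v₂ := by
      rw [← algebraMap_smul K rr (lam • v₁), ← algebraMap_smul K rr' (mu • v₂),
        smul_smul, smul_smul]
    have heq := huK _ _ _ _ (hL.symm.trans (by rw [← hyz, ← hr, ← hr', hR]))
    refine ⟨rr', ?_⟩
    rw [div_mul_eq_mul_div, heq.2, mul_div_cancel_right₀ _ hmu0]
  have hT'b : ∀ g : G, ∃ r : R, (mu / lam) * algebraMap R K (bF g) = algebraMap R K r := by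
    intro g
    have hv₂T' : mu • v₂ ∈ T' := by
      rw [hT'dec']; exact Submodule.mem_sup_right (Submodule.mem_span_singleton_self _)
    have hmem : ρ g (mu • v₂) ∈ T' := hT'stab g _ hv₂T'
    rw [hT'dec'] at hmem
    obtain ⟨y, hy, z, hz, hyz⟩ := Submodule.mem_sup.mp hmem
    obtain ⟨rr, hr⟩ := Submodule.mem_span_singleton.mp hy
    obtain ⟨rr', hr'⟩ := Submodule.mem_span_singleton.mp hz
    have hL : ρ g (mu • v₂) = (mu * algebraMap R K (bF g)) • v₁
        + (mu * algebraMap R K (dF g)) • v₂ := by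
      rw [map_smul, hbdK g, smul_add, smul_smul, smul_smul]
    have hR : rr • (lam • v₁) + rr' • (mu • v₂)
        = (algebraMap R K rr * lam) • v₁ + (algebraMap R K rr' * mu) • v₂ := by
      rw [← algebraMap_smul K rr (lam • v₁), ← algebraMap_smul K rr' (mu • v₂),
        smul_smul, smul_smul]
    have heq := huK _ _ _ _ (hL.symm.trans (by rw [← hyz, ← hr, ← hr', hR]))
    refine ⟨rr, ?_⟩
    rw [div_mul_eq_mul_div, heq.1, mul_div_cancel_right₀ _ hlam0]
  choose ccF hcc using hT'c
  choose bbF hbb using hT'b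
  obtain ⟨u, wden, hwdenmem, huw⟩ := IsFractionRing.div_surjective (A := R) (lam / mu)
  have hwden0 : wden ≠ 0 := nonZeroDivisors.ne_zero hwdenmem
  have hlm0 : lam / mu ≠ 0 := div_ne_zero hlam0 hmu0
  have hu0 : u ≠ 0 := by
    intro h
    rw [h, map_zero, zero_div] at huw
    exact hlm0 huw.symm
  letI := UniqueFactorizationMonoid.normalizationMonoid (α := R)
  letI := UniqueFactorizationMonoid.toNormalizedGCDMonoid R
  obtain ⟨u₀, w₀, hu₀, hw₀, hgcdunit⟩ := extract_gcd u wden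
  have hgcd0 : gcd u wden ≠ 0 := fun h => hu0 (by rw [hu₀, h, zero_mul])
  have hu₀0 : u₀ ≠ 0 := fun h => hu0 (by rw [hu₀, h, mul_zero])
  have hw₀0 : w₀ ≠ 0 := fun h => hwden0 (by rw [hw₀, h, mul_zero])
  have hgcdK : algebraMap R K (gcd u wden) ≠ 0 := fun h => hgcd0 (inj (by rw [h, map_zero]))
  have hu₀K : algebraMap R K u₀ ≠ 0 := fun h => hu₀0 (inj (by rw [h, map_zero]))
  have hw₀K : algebraMap R K w₀ ≠ 0 := fun h => hw₀0 (inj (by rw [h, map_zero]))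
  have hfrac : lam / mu = algebraMap R K u₀ / algebraMap R K w₀ := by
    have e1 : algebraMap R K u = algebraMap R K (gcd u wden) * algebraMap R K u₀ := by
      rw [← map_mul, ← hu₀]
    have e2 : algebraMap R K wden = algebraMap R K (gcd u wden) * algebraMap R K w₀ := by
      rw [← map_mul, ← hw₀]
    rw [← huw, e1, e2, mul_div_mul_left _ _ hgcdK]
  have hfracinv : mu / lam = algebraMap R K w₀ / algebraMap R K u₀ := by
    rw [← inv_div lam mu, hfrac, inv_div]
  by_cases hu₀unit : IsUnit u₀
  · by_cases hw₀unit : IsUnit w₀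
    · -- both units : the lattices are homothetic, with ratio mu
      have h5 : algebraMap R K u₀ * algebraMap R K ((hu₀unit.unit⁻¹ : Rˣ) : R) = 1 := by
        rw [← map_mul]
        have h6 := hu₀unit.unit.mul_inv
        rw [IsUnit.unit_spec] at h6
        rw [h6, map_one]
      have hrK : algebraMap R K (w₀ * ((hu₀unit.unit⁻¹ : Rˣ) : R)) = mu / lam := by
        rw [map_mul, hfracinv, eq_div_iff hu₀K, mul_assoc]
        rw [mul_comm (algebraMap R K ((hu₀unit.unit⁻¹ : Rˣ) : R)) (algebraMap R K u₀), h5,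
          mul_one]
      have hrunit : IsUnit (w₀ * ((hu₀unit.unit⁻¹ : Rˣ) : R)) :=
        hw₀unit.mul (Units.isUnit _)
      refine ⟨mu, hmu0, ?_⟩
      show Submodule.map ((LinearMap.lsmul K V mu).restrictScalars R) T = T'
      rw [hTdec, Submodule.map_sup, Submodule.map_span, Submodule.map_span,
        Set.image_singleton, Set.image_singleton]
      have happ1 : ((LinearMap.lsmul K V mu).restrictScalars R) v₁ = mu • v₁ := rfl
      have happ2 : ((LinearMap.lsmul K V mu).restrictScalars R) v₂ = mu • v₂ := rfl
      rw [happ1, happ2, hT'dec']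
      congr 1
      have hmv : mu • v₁ = (w₀ * ((hu₀unit.unit⁻¹ : Rˣ) : R)) • (lam • v₁) := by
        rw [← algebraMap_smul K (w₀ * ((hu₀unit.unit⁻¹ : Rˣ) : R)) (lam • v₁),
          smul_smul, hrK, div_mul_cancel₀ _ hlam0]
      rw [hmv, Submodule.span_singleton_smul_eq hrunit]
    · -- w₀ has a prime factor p, and p divides all cF g
      obtain ⟨p, hpirr, hpw⟩ := WfDvdMonoid.exists_irreducible_factor hw₀unit hw₀0
      have hp : Prime p := UniqueFactorizationMonoid.irreducible_iff_prime.mp hpirr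
      have hpu : ¬ p ∣ u₀ := fun hd =>
        hp.not_unit (isUnit_of_dvd_unit (dvd_gcd hd hpw) hgcdunit)
      have hdvdC : ∀ g, p ∣ cF g := by
        intro g
        have h1 := hcc g
        rw [hfrac, div_mul_eq_mul_div, div_eq_iff hw₀K] at h1
        have h3 : u₀ * cF g = ccF g * w₀ := inj (by rw [map_mul, map_mul, ← h1])
        have h4 : p ∣ u₀ * cF g := by
          rw [h3]; exact dvd_mul_of_dvd_right hpw _
        exact (hp.2.2 u₀ (cF g) h4).resolve_left hpu
      have hJle : J ≤ Ideal.span {p} :=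
        aux_J_le_span ρ tr J hJ p v₁ v₂ hind aF cF bF dF hac hbd htr' (Or.inr hdvdC)
      exact absurd hJle (hNempty _ (aux_isHeightOnePrime_span hp))
  · -- u₀ has a prime factor p, and p divides all bF g
    obtain ⟨p, hpirr, hpu⟩ := WfDvdMonoid.exists_irreducible_factor hu₀unit hu₀0
    have hp : Prime p := UniqueFactorizationMonoid.irreducible_iff_prime.mp hpirr
    have hpw : ¬ p ∣ w₀ := fun hd =>
      hp.not_unit (isUnit_of_dvd_unit (dvd_gcd hpu hd) hgcdunit)
    have hdvdB : ∀ g, p ∣ bF g := by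
      intro g
      have h1 := hbb g
      rw [hfracinv, div_mul_eq_mul_div, div_eq_iff hu₀K] at h1
      have h3 : w₀ * bF g = bbF g * u₀ := inj (by rw [map_mul, map_mul, ← h1])
      have h4 : p ∣ w₀ * bF g := by
        rw [h3]; exact dvd_mul_of_dvd_right hpu _
      exact (hp.2.2 w₀ (bF g) h4).resolve_left hpw
    have hJle : J ≤ Ideal.span {p} :=
      aux_J_le_span ρ tr J hJ p v₁ v₂ hind aF cF bF dF hac hbd htr' (Or.inl hdvdB)
    exact absurd hJle (hNempty _ (aux_isHeightOnePrime_span hp))
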